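/- Let n ≥ 0 and G = T₂^{⊗n}, a 2^n × 2^n invertible matrix over F₂. For every K with 1 ≤ K ≤ 2^n, the spectrum value S_G(K) equals the K-th largest element (with multiplicity) of the multiset { 2^{w(i)} : 0 ≤ i ≤ 2^n − 1 }, where w(i) denotes the number of ones in the binary representation of i. Equivalently, the minimum-distance spectrum of T₂^{⊗n} is the decreasingly sorted n-fold Kronecker power of the vector (2,1). -/

import Mathlib

open Matrix

noncomputable section

abbrev F2 : Type := ZMod 2

/-- The Arikan kernel `T₂ = ((1,0),(1,1))` over `F₂`. -/
def T2 : Matrix (Fin 2) (Fin 2) F2 := !![1, 0; 1, 1]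

/-- Kronecker product of `Fin`-indexed square matrices, with the standard index
convention `(A ⊗ B) i j = A (i / n) (j / n) * B (i % n) (j % n)`. -/
def kron {m n : ℕ} (A : Matrix (Fin m) (Fin m) F2) (B : Matrix (Fin n) (Fin n) F2) :
    Matrix (Fin (m * n)) (Fin (m * n)) F2 :=
  fun i j => A i.divNat j.divNat * B i.modNat j.modNat

/-- The `n`-fold Kronecker power of `T₂` (with `T₂^{⊗0}` the 1×1 identity). -/
def T2pow : (n : ℕ) → Matrix (Fin (2 ^ n)) (Fin (2 ^ n)) F2
  | 0 => 1
  | n + 1 => (kron T2 (T2pow n)).submatrix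
      (Fin.cast (by rw [pow_succ, Nat.mul_comm]))
      (Fin.cast (by rw [pow_succ, Nat.mul_comm]))

/-- Minimum distance `d_G(I)`: the minimum Hamming weight of `u · G` over all
nonzero row vectors `u` with support contained in `I`. -/
def minDist {N : ℕ} (G : Matrix (Fin N) (Fin N) F2) (I : Finset (Fin N)) : ℕ :=
  sInf {w | ∃ u : Fin N → F2, u ≠ 0 ∧ (∀ i, u i ≠ 0 → i ∈ I) ∧
    hammingNorm (Matrix.vecMul u G) = w}

/-- Minimum-distance spectrum `S_G(K)`: the maximum of `d_G(I)` over all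
row-index sets `I` of size `K`. -/
def spec {N : ℕ} (G : Matrix (Fin N) (Fin N) F2) (K : ℕ) : ℕ :=
  sSup {d | ∃ I : Finset (Fin N), I.card = K ∧ minDist G I = d}

/-- `K`-th largest element (1-indexed, counted with multiplicity) of a
multiset of natural numbers. -/
def kthLargest (s : Multiset ℕ) (K : ℕ) : ℕ :=
  ((s.sort (· ≤ ·)).reverse).getD (K - 1) 0

namespace SpecAux

open Finset

def w (i : ℕ) : ℕ := (Nat.digits 2 i).sum
def fN (i : ℕ) : ℕ := 2 ^ w i

lemma w_eq (i : ℕ) : w i = i % 2 + w (i / 2) := by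
  rcases Nat.eq_zero_or_pos i with h | h
  · subst h; simp [w]
  · rw [w, Nat.digits_def' (by norm_num) h]; simp [w]

lemma w_add_pow : ∀ n i : ℕ, i < 2 ^ n → w (2 ^ n + i) = w i + 1 := by
  intro n
  induction n with
  | zero => intro i hi; interval_cases i; simp [w]
  | succ n ih =>
    intro i hi
    rw [w_eq (2 ^ (n+1) + i), w_eq i]
    have h2 : (2 ^ (n+1) + i) / 2 = 2 ^ n + i / 2 := by rw [pow_succ]; omega
    have h1 : (2 ^ (n+1) + i) % 2 = i % 2 := by omega
    rw [h1, h2, ih _ (by omega)]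
    ring

lemma fN_add_pow {n i : ℕ} (h : i < 2 ^ n) : fN (2 ^ n + i) = 2 * fN i := by
  rw [fN, fN, w_add_pow n i h, pow_succ]; ring

lemma fN_pos (i : ℕ) : 0 < fN i := Nat.pow_pos (by norm_num)

lemma pow_lt (n : ℕ) (i : Fin (2 ^ n)) : (i : ℕ) < 2 ^ (n + 1) :=
  lt_of_lt_of_le i.isLt (by rw [pow_succ]; omega)

def lo {n : ℕ} (i : Fin (2 ^ n)) : Fin (2 ^ (n + 1)) := ⟨i, pow_lt n i⟩
def hi {n : ℕ} (i : Fin (2 ^ n)) : Fin (2 ^ (n + 1)) :=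
  ⟨2 ^ n + i, by have := i.isLt; rw [pow_succ]; omega⟩

lemma T2_00 : T2 0 0 = 1 := rfl
lemma T2_01 : T2 0 1 = 0 := rfl
lemma T2_10 : T2 1 0 = 1 := rfl
lemma T2_11 : T2 1 1 = 1 := rfl

lemma T2pow_succ {n : ℕ} (i j : Fin (2 ^ (n + 1))) :
    T2pow (n + 1) i j =
      T2 ⟨i.val / 2 ^ n, Nat.div_lt_of_lt_mul (by simpa [Nat.pow_succ] using i.isLt)⟩
         ⟨j.val / 2 ^ n, Nat.div_lt_of_lt_mul (by simpa [Nat.pow_succ] using j.isLt)⟩ *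
      T2pow n ⟨i.val % 2 ^ n, Nat.mod_lt _ (Nat.pow_pos (by norm_num))⟩
              ⟨j.val % 2 ^ n, Nat.mod_lt _ (Nat.pow_pos (by norm_num))⟩ := rfl

lemma T2pow_succ' {n : ℕ} (i j : Fin (2 ^ (n + 1))) (a b : Fin 2) (i' j' : Fin (2 ^ n))
    (hia : i.val / 2 ^ n = a.val) (hja : j.val / 2 ^ n = b.val)
    (him : i.val % 2 ^ n = i'.val) (hjm : j.val % 2 ^ n = j'.val) :
    T2pow (n + 1) i j = T2 a b * T2pow n i' j' := by
  rw [T2pow_succ]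
  congr 1
  · congr 1 <;> exact Fin.ext ‹_›
  · congr 1 <;> exact Fin.ext ‹_›

lemma entry_lo_lo {n : ℕ} (i j : Fin (2 ^ n)) :
    T2pow (n + 1) (lo i) (lo j) = T2pow n i j := by
  rw [T2pow_succ' (lo i) (lo j) 0 0 i j (Nat.div_eq_of_lt i.isLt) (Nat.div_eq_of_lt j.isLt)
    (Nat.mod_eq_of_lt i.isLt) (Nat.mod_eq_of_lt j.isLt), T2_00, one_mul]

lemma entry_lo_hi {n : ℕ} (i j : Fin (2 ^ n)) :
    T2pow (n + 1) (lo i) (hi j) = 0 := by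
  rw [T2pow_succ' (lo i) (hi j) 0 1 i j (Nat.div_eq_of_lt i.isLt)
    (by show (2 ^ n + j.val) / 2 ^ n = 1; rw [Nat.add_div_left _ (Nat.pow_pos (by norm_num)), Nat.div_eq_of_lt j.isLt])
    (Nat.mod_eq_of_lt i.isLt)
    (by show (2 ^ n + j.val) % 2 ^ n = j.val; rw [Nat.add_mod_left, Nat.mod_eq_of_lt j.isLt]),
    T2_01, zero_mul]

lemma entry_hi_lo {n : ℕ} (i j : Fin (2 ^ n)) :
    T2pow (n + 1) (hi i) (lo j) = T2pow n i j := by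
  rw [T2pow_succ' (hi i) (lo j) 1 0 i j
    (by show (2 ^ n + i.val) / 2 ^ n = 1; rw [Nat.add_div_left _ (Nat.pow_pos (by norm_num)), Nat.div_eq_of_lt i.isLt])
    (Nat.div_eq_of_lt j.isLt)
    (by show (2 ^ n + i.val) % 2 ^ n = i.val; rw [Nat.add_mod_left, Nat.mod_eq_of_lt i.isLt])
    (Nat.mod_eq_of_lt j.isLt), T2_10, one_mul]

lemma entry_hi_hi {n : ℕ} (i j : Fin (2 ^ n)) :
    T2pow (n + 1) (hi i) (hi j) = T2pow n i j := by
  rw [T2pow_succ' (hi i) (hi j) 1 1 i j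
    (by show (2 ^ n + i.val) / 2 ^ n = 1; rw [Nat.add_div_left _ (Nat.pow_pos (by norm_num)), Nat.div_eq_of_lt i.isLt])
    (by show (2 ^ n + j.val) / 2 ^ n = 1; rw [Nat.add_div_left _ (Nat.pow_pos (by norm_num)), Nat.div_eq_of_lt j.isLt])
    (by show (2 ^ n + i.val) % 2 ^ n = i.val; rw [Nat.add_mod_left, Nat.mod_eq_of_lt i.isLt])
    (by show (2 ^ n + j.val) % 2 ^ n = j.val; rw [Nat.add_mod_left, Nat.mod_eq_of_lt j.isLt]),
    T2_11, one_mul]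

lemma sum_split {M : Type*} [AddCommMonoid M] {n : ℕ} (g : Fin (2 ^ (n + 1)) → M) :
    ∑ i, g i = (∑ i, g (lo i)) + ∑ i, g (hi i) := by
  have h : 2 ^ n + 2 ^ n = 2 ^ (n + 1) := by rw [pow_succ]; omega
  rw [← Equiv.sum_comp (finCongr h) g, Fin.sum_univ_add]
  congr 1 <;> (apply Finset.sum_congr rfl; intro i _; congr 1; apply Fin.ext; simp [lo, hi, finCongr])

lemma hn_split {n : ℕ} (v : Fin (2 ^ (n + 1)) → F2) :
    hammingNorm v = hammingNorm (fun j => v (lo j)) + hammingNorm (fun j => v (hi j)) := by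
  simp only [hammingNorm, Finset.card_filter]
  exact sum_split (g := fun j => if v j ≠ 0 then 1 else 0)

lemma vecMul_lo {n : ℕ} (u : Fin (2 ^ (n + 1)) → F2) (j : Fin (2 ^ n)) :
    vecMul u (T2pow (n + 1)) (lo j) = vecMul (fun i => u (lo i) + u (hi i)) (T2pow n) j := by
  simp only [vecMul, dotProduct]
  rw [sum_split (g := fun i => u i * T2pow (n + 1) i (lo j))]
  simp only [entry_lo_lo, entry_hi_lo]
  rw [← Finset.sum_add_distrib]
  apply Finset.sum_congr rfl; intros; ring

lemma vecMul_hi {n : ℕ} (u : Fin (2 ^ (n + 1)) → F2) (j : Fin (2 ^ n)) :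
    vecMul u (T2pow (n + 1)) (hi j) = vecMul (fun i => u (hi i)) (T2pow n) j := by
  simp only [vecMul, dotProduct]
  rw [sum_split (g := fun i => u i * T2pow (n + 1) i (hi j))]
  simp only [entry_lo_hi, entry_hi_hi, mul_zero]
  simp

def supp {N : ℕ} (u : Fin N → F2) : Finset (Fin N) := Finset.univ.filter (fun i => u i ≠ 0)

lemma mem_supp {N : ℕ} {u : Fin N → F2} {i : Fin N} : i ∈ supp u ↔ u i ≠ 0 := by
  simp [supp]

lemma supp_nonempty {N : ℕ} {u : Fin N → F2} (hu : u ≠ 0) : (supp u).Nonempty := by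
  rw [Function.ne_iff] at hu
  obtain ⟨i, hi⟩ := hu
  exact ⟨i, mem_supp.mpr hi⟩

lemma hammingNorm_eq_card_supp {N : ℕ} (u : Fin N → F2) : hammingNorm u = (supp u).card := rfl

lemma lo_or_hi {n : ℕ} (i : Fin (2 ^ (n + 1))) :
    (∃ i₀, i = lo i₀) ∨ ∃ i₀, i = hi i₀ := by
  by_cases h : i.val < 2 ^ n
  · exact Or.inl ⟨⟨i.val, h⟩, Fin.ext rfl⟩
  · refine Or.inr ⟨⟨i.val - 2 ^ n, ?_⟩, Fin.ext ?_⟩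
    · have h2 : (i : ℕ) < 2 ^ n * 2 := by simpa [pow_succ] using i.isLt
      omega
    · show i.val = 2 ^ n + (i.val - 2 ^ n); omega

lemma hammingNorm_zero' {N : ℕ} : hammingNorm (fun _ : Fin N => (0 : F2)) = 0 := by
  simp [hammingNorm]

lemma rowWeight : ∀ (n : ℕ) (i : Fin (2 ^ n)),
    hammingNorm (fun j => T2pow n i j) = fN i.val := by
  intro n
  induction n with
  | zero =>
    intro i
    have h0 : ∀ j, T2pow 0 i j = 1 := by
      intro j
      have hj : j = i := Fin.ext (by omega)
      rw [hj]
      show (1 : Matrix (Fin (2 ^ 0)) (Fin (2 ^ 0)) F2) i i = 1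
      exact Matrix.one_apply_eq i
    have : fN i.val = 1 := by
      have : i.val = 0 := by omega
      rw [this]; simp [fN, w]
    rw [this]
    simp only [h0, hammingNorm]
    rw [Finset.filter_true_of_mem (by intro x _; exact one_ne_zero)]
    simp
  | succ n ih =>
    intro i
    rcases lo_or_hi i with ⟨i₀, rfl⟩ | ⟨i₀, rfl⟩
    · rw [hn_split]
      simp only [entry_lo_lo, entry_lo_hi]
      rw [ih i₀, hammingNorm_zero']
      rfl
    · rw [hn_split]
      simp only [entry_hi_lo, entry_hi_hi]
      rw [ih i₀]
      show fN i₀.val + fN i₀.val = fN (2 ^ n + i₀.val)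
      rw [fN_add_pow i₀.isLt]; ring

set_option maxHeartbeats 2000000 in
lemma key : ∀ (n : ℕ) (u : Fin (2 ^ n) → F2) (hu : u ≠ 0),
    (supp u).inf' (supp_nonempty hu) (fun i => fN i.val) ≤ hammingNorm (vecMul u (T2pow n)) := by
  intro n
  induction n with
  | zero =>
    intro u hu
    obtain ⟨i, hi⟩ := supp_nonempty hu
    refine le_trans (Finset.inf'_le _ hi) ?_
    have hval : fN i.val = 1 := by
      have : i.val = 0 := by omega
      rw [this]; simp [fN, w]
    rw [hval, hammingNorm_eq_card_supp]
    have : (supp (vecMul u (T2pow 0))).Nonempty := by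
      apply supp_nonempty
      intro h
      apply hu
      funext j
      have h2 := congrFun h j
      rw [show T2pow 0 = 1 from rfl, Matrix.vecMul_one] at h2
      exact h2
    exact this.card_pos
  | succ n ih =>
    intro u hu
    set u0 : Fin (2 ^ n) → F2 := fun i => u (lo i) with hu0
    set u1 : Fin (2 ^ n) → F2 := fun i => u (hi i) with hu1
    set s : Fin (2 ^ n) → F2 := fun i => u (lo i) + u (hi i) with hs
    set T := (supp u).inf' (supp_nonempty hu) (fun i => fN i.val) with hT
    have hwt : hammingNorm (vecMul u (T2pow (n + 1))) =
        hammingNorm (vecMul s (T2pow n)) + hammingNorm (vecMul u1 (T2pow n)) := by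
      rw [hn_split]
      congr 1
      · congr 1; funext j; exact vecMul_lo u j
      · congr 1; funext j; exact vecMul_hi u j
    rw [hwt]
    have fa : ∀ i : Fin (2 ^ n), u0 i ≠ 0 → T ≤ fN i.val := by
      intro i hne
      exact Finset.inf'_le (fun i => fN i.val) ((mem_supp (u := u)).mpr (hne : u (lo i) ≠ 0))
    have fb : ∀ i : Fin (2 ^ n), u1 i ≠ 0 → T ≤ 2 * fN i.val := by
      intro i hne
      have h2 : T ≤ fN (SpecAux.hi i).val :=
        Finset.inf'_le (fun i : Fin (2 ^ (n + 1)) => fN i.val) ((mem_supp (u := u)).mpr (hne : u (SpecAux.hi i) ≠ 0))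
      have h3 : (SpecAux.hi i).val = 2 ^ n + i.val := rfl
      rw [h3, fN_add_pow i.isLt] at h2
      exact h2
    by_cases h1 : u1 = 0
    · have hu0 : u0 ≠ 0 := by
        intro h0
        apply hu
        funext i
        rcases lo_or_hi i with ⟨i₀, rfl⟩ | ⟨i₀, rfl⟩
        · exact congrFun h0 i₀
        · exact congrFun h1 i₀
      have hsu : s = u0 := by
        funext i
        show u (lo i) + u (SpecAux.hi i) = u (lo i)
        rw [show u (SpecAux.hi i) = 0 from congrFun h1 i, add_zero]
      obtain ⟨i₀, hi₀, hmin⟩ := Finset.exists_mem_eq_inf' (supp_nonempty hu0) (fun i => fN i.val)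
      have e1 : T ≤ fN i₀.val := fa i₀ ((mem_supp (u := u0)).mp hi₀)
      have e2 : fN i₀.val ≤ hammingNorm (vecMul u0 (T2pow n)) := hmin ▸ ih u0 hu0
      have e3 : hammingNorm (vecMul s (T2pow n)) = hammingNorm (vecMul u0 (T2pow n)) := by rw [hsu]
      omega
    · have m1le := ih u1 h1
      obtain ⟨i₁, hi₁, hmin1⟩ := Finset.exists_mem_eq_inf' (supp_nonempty h1) (fun i => fN i.val)
      have e6 : fN i₁.val ≤ hammingNorm (vecMul u1 (T2pow n)) := hmin1 ▸ m1le
      by_cases hs0 : s = 0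
      · have hkey : T ≤ fN i₁.val := by
          apply fa
          intro h4
          have h2 : u (lo i₁) + u (SpecAux.hi i₁) = 0 := congrFun hs0 i₁
          have h3 : u (SpecAux.hi i₁) ≠ 0 := (mem_supp (u := u1)).mp hi₁
          have h4' : u (lo i₁) = 0 := h4
          rw [h4', zero_add] at h2
          exact h3 h2
        omega
      · have msle := ih s hs0
        obtain ⟨i₂, hi₂, hmin2⟩ := Finset.exists_mem_eq_inf' (supp_nonempty hs0) (fun i => fN i.val)
        have e5 : fN i₂.val ≤ hammingNorm (vecMul s (T2pow n)) := hmin2 ▸ msle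
        have hi₂' : u (lo i₂) ≠ 0 ∨ u (SpecAux.hi i₂) ≠ 0 := by
          have h6 := (mem_supp (u := s)).mp hi₂
          by_contra hc
          push_neg at hc
          apply h6
          show u (lo i₂) + u (SpecAux.hi i₂) = 0
          rw [hc.1, hc.2, add_zero]
        rcases hi₂' with h | h
        · have e7 : T ≤ fN i₂.val := fa i₂ h
          omega
        · have hm1i2 : fN i₁.val ≤ fN i₂.val :=
            hmin1 ▸ Finset.inf'_le (fun i : Fin (2 ^ n) => fN i.val) ((mem_supp (u := u1)).mpr h)
          have hT2 : T ≤ 2 * fN i₁.val := fb i₁ ((mem_supp (u := u1)).mp hi₁)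
          omega

lemma vecMul_single {N : ℕ} (i : Fin N) (G : Matrix (Fin N) (Fin N) F2) :
    vecMul (Pi.single i 1) G = G i := by
  funext j
  simp [vecMul, dotProduct, Pi.single_apply, Finset.sum_ite_eq]

lemma minDist_eq {n : ℕ} (I : Finset (Fin (2 ^ n))) (hI : I.Nonempty) :
    minDist (T2pow n) I = I.inf' hI (fun i => fN i.val) := by
  obtain ⟨i₀, hi₀, hmin⟩ := Finset.exists_mem_eq_inf' hI (fun i => fN i.val)
  have hmem : I.inf' hI (fun i => fN i.val) ∈
      {w | ∃ u : Fin (2 ^ n) → F2, u ≠ 0 ∧ (∀ i, u i ≠ 0 → i ∈ I) ∧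
        hammingNorm (Matrix.vecMul u (T2pow n)) = w} := by
    refine ⟨Pi.single i₀ 1, ?_, ?_, ?_⟩
    · intro h
      have := congrFun h i₀
      rw [Pi.single_eq_same] at this
      exact one_ne_zero this
    · intro i hi
      have : i = i₀ := by
        by_contra hne
        rw [Pi.single_eq_of_ne hne] at hi
        exact hi rfl
      rwa [this]
    · rw [vecMul_single, rowWeight n i₀, hmin]
  apply le_antisymm
  · exact Nat.sInf_le hmem
  · apply le_csInf ⟨_, hmem⟩
    rintro w ⟨u, hu, hsub, rfl⟩
    refine le_trans ?_ (key n u hu)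
    obtain ⟨i₁, hi₁, hmin1⟩ := Finset.exists_mem_eq_inf' (supp_nonempty hu) (fun i => fN i.val)
    rw [hmin1]
    exact Finset.inf'_le _ (hsub i₁ ((mem_supp (u := u)).mp hi₁))

lemma main_comb {N K : ℕ} (f : Fin N → ℕ) (hK1 : 1 ≤ K) (hK2 : K ≤ N) :
    sSup {d | ∃ I : Finset (Fin N), I.card = K ∧ ∃ h : I.Nonempty, I.inf' h f = d} =
      kthLargest (Finset.univ.val.map f) K := by
  classical
  set σ := Tuple.sort f with hσ
  set g : Fin N → ℕ := f ∘ σ with hg'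
  have hg : Monotone g := Tuple.monotone_sort f
  set s : Multiset ℕ := Finset.univ.val.map f with hs
  set L : List ℕ := s.sort (· ≤ ·) with hL
  have hlen : L.length = N := by
    rw [hL, Multiset.length_sort, hs, Multiset.card_map]
    simp
  have hofn : List.ofFn g = L := by
    apply List.Perm.eq_of_pairwise' (List.pairwise_ofFn.mpr fun i j h => hg h.le) (Multiset.pairwise_sort _ _) _
    rw [← Multiset.coe_eq_coe, Multiset.sort_eq, ← Fin.univ_val_map, hs, hg']
    have h1 : Multiset.map (f ∘ σ) Finset.univ.val =
        Multiset.map f (Multiset.map (⇑σ) Finset.univ.val) := by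
      rw [Multiset.map_map]
    rw [h1]
    congr 1
    have h2 := congrArg Finset.val (Finset.map_univ_equiv σ)
    rwa [Finset.map_val] at h2
  have hNK : N - K < N := by omega
  set i₀ : Fin N := ⟨N - K, hNK⟩ with hi₀
  set t : ℕ := g i₀ with ht'
  have hkth : kthLargest s K = t := by
    rw [kthLargest]
    have h1 : K - 1 < L.reverse.length := by rw [List.length_reverse, hlen]; omega
    rw [List.getD_eq_getElem _ _ h1, List.getElem_reverse]
    have h2 : L.length - 1 - (K - 1) = N - K := by omega
    have h3 : N - K < (List.ofFn g).length := by rw [List.length_ofFn]; omega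
    have h6 := List.getElem_ofFn (f := g) (i := N - K) h3
    simp only [hofn] at h6
    simp only [h2]
    rw [h6]
  rw [hkth]
  have hach : ∃ I : Finset (Fin N), I.card = K ∧ ∃ h : I.Nonempty, I.inf' h f = t := by
    refine ⟨(Finset.Ici i₀).map σ.toEmbedding, ?_, ?_⟩
    · rw [Finset.card_map, Fin.card_Ici]
      show N - (N - K) = K
      omega
    · have hmem : σ i₀ ∈ (Finset.Ici i₀).map σ.toEmbedding :=
        Finset.mem_map_of_mem _ (Finset.mem_Ici.mpr le_rfl)
      refine ⟨⟨_, hmem⟩, le_antisymm (Finset.inf'_le _ hmem) ?_⟩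
      apply Finset.le_inf'
      intro y hy
      obtain ⟨j, hj, rfl⟩ := Finset.mem_map.mp hy
      exact hg (Finset.mem_Ici.mp hj)
  have hbound : ∀ d, (∃ I : Finset (Fin N), I.card = K ∧ ∃ h : I.Nonempty, I.inf' h f = d) →
      d ≤ t := by
    rintro d ⟨I, hcard, hne, rfl⟩
    by_contra hlt
    push_neg at hlt
    have hJ : ∀ j ∈ I.image σ.symm, i₀ < j := by
      intro j hj
      obtain ⟨x, hx, rfl⟩ := Finset.mem_image.mp hj
      have h4 : t < f x := lt_of_lt_of_le hlt (Finset.inf'_le _ hx)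
      have h5 : g (σ.symm x) = f x := by simp [hg']
      by_contra hle
      push_neg at hle
      have := hg hle
      rw [h5] at this
      omega
    have hsub : I.image σ.symm ⊆ Finset.Ioi i₀ := fun j hj => Finset.mem_Ioi.mpr (hJ j hj)
    have hc1 : (I.image σ.symm).card = K := by
      rw [Finset.card_image_of_injective _ σ.symm.injective, hcard]
    have hc2 : (Finset.Ioi i₀).card = K - 1 := by
      rw [Fin.card_Ioi]
      show N - 1 - (N - K) = K - 1
      omega
    have := Finset.card_le_card hsub
    omega
  apply le_antisymm
  · exact csSup_le ⟨t, hach⟩ hbound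
  · exact le_csSup ⟨t, hbound⟩ hach

end SpecAux

theorem spectrum_T2pow
    (n : ℕ) (K : ℕ) (hK1 : 1 ≤ K) (hK2 : K ≤ 2 ^ n) :
    spec (T2pow n) K =
      kthLargest
        ((Multiset.range (2 ^ n)).map (fun i => 2 ^ (Nat.digits 2 i).sum)) K := by
  have hset : {d | ∃ I : Finset (Fin (2 ^ n)), I.card = K ∧ minDist (T2pow n) I = d} =
      {d | ∃ I : Finset (Fin (2 ^ n)), I.card = K ∧
        ∃ h : I.Nonempty, I.inf' h (fun i => SpecAux.fN i.val) = d} := by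
    ext d
    constructor
    · rintro ⟨I, hc, rfl⟩
      have hne : I.Nonempty := Finset.card_pos.mp (by omega)
      exact ⟨I, hc, hne, (SpecAux.minDist_eq I hne).symm⟩
    · rintro ⟨I, hc, hne, rfl⟩
      exact ⟨I, hc, SpecAux.minDist_eq I hne⟩
  rw [spec, hset, SpecAux.main_comb _ hK1 hK2]
  congr 1
  have h1 : (fun i : Fin (2 ^ n) => SpecAux.fN i.val) =
      (fun i : ℕ => 2 ^ (Nat.digits 2 i).sum) ∘ Fin.val := rfl
  rw [h1, ← Multiset.map_map]
  congr 1
  have h2 := congrArg Finset.val (Fin.map_valEmbedding_univ (n := 2 ^ n))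
  rw [Finset.map_val] at h2
  have h3 : (Finset.Iio (2 ^ n)).val = Multiset.range (2 ^ n) := by
    rw [Nat.Iio_eq_range, Finset.range_val]
  rw [← h3]
  exact h2
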